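/- Under the same setup with η_1 ≠ η_2, if y(0) = max{|x̃_1(0)|, x̃_2(0)/|a|} ≤ L/(8 L_1), then for all t ≥ 0 the second component satisfies two-sided exponential bounds: (1/2) x_2(0) e^{-t η_2} ≤ x_2(t) ≤ 2 x_2(0) e^{-t η_2}. -/

import Mathlib

open MeasureTheory Set Filter Topology

lemma sis_aux_exp_half : Real.exp (1/2 : ℝ) ≤ 7/4 := by
  have h2 : Real.exp (1/2 : ℝ) * Real.exp (1/2 : ℝ) = Real.exp 1 := by
    rw [← Real.exp_add]; norm_num
  nlinarith [Real.exp_one_lt_d9, Real.exp_pos (1/2 : ℝ)]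

set_option maxHeartbeats 2000000 in
lemma sis_aux_decay (eta1 eta2 L L1 : ℝ) (f p q g : ℝ → ℝ)
    (hL : 0 < L) (hL1 : 0 < L1) (hLe1 : L ≤ eta1) (hLe2 : L ≤ eta2)
    (hpnn : ∀ t, 0 ≤ p t)
    (hqc : Continuous q) (hgc : Continuous g)
    (hf : ∀ t, HasDerivAt f (-eta1 * f t + q t) t)
    (hp : ∀ t, HasDerivAt p (p t * g t) t)
    (hq : ∀ t, |q t| ≤ L1 * (max |f t| (p t)) ^ 2)
    (hg : ∀ t, |g t + eta2| ≤ L1 * max |f t| (p t))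
    (hy0 : max |f 0| (p 0) ≤ L / (8 * L1)) :
    ∀ t, 0 ≤ t → (1 / 2) * p 0 * Real.exp (-t * eta2) ≤ p t ∧
      p t ≤ 2 * p 0 * Real.exp (-t * eta2) := by
  have hfc : Continuous f := continuous_iff_continuousAt.mpr fun t => (hf t).continuousAt
  have hpc : Continuous p := continuous_iff_continuousAt.mpr fun t => (hp t).continuousAt
  set Y : ℝ → ℝ := fun t => max |f t| (p t) with hYdef
  have hYc : Continuous Y := (hfc.abs).max hpc
  have hYnn : ∀ t, 0 ≤ Y t := fun t => le_trans (abs_nonneg _) (le_max_left _ _)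
  have hY0 : Y 0 ≤ L / (8 * L1) := hy0
  have hLYmain : Y 0 * (8 * L1) ≤ L := (le_div_iff₀ (by positivity)).mp hY0
  set G : ℝ → ℝ := fun u => ∫ s in (0:ℝ)..u, g s with hGdef
  have hGd : ∀ u, HasDerivAt G (g u) u := fun u =>
    intervalIntegral.integral_hasDerivAt_right (hgc.intervalIntegrable _ _)
      (hgc.stronglyMeasurableAtFilter _ _) hgc.continuousAt
  have hG0 : G 0 = 0 := intervalIntegral.integral_same
  -- representation p u = p 0 * exp (G u)
  have hprep : ∀ u, p u = p 0 * Real.exp (G u) := by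
    have hder : ∀ u, HasDerivAt (fun v => p v * Real.exp (-G v)) 0 u := by
      intro u
      have h1 : HasDerivAt (fun v => Real.exp (-G v)) (Real.exp (-G u) * -g u) u :=
        ((hGd u).neg).exp
      have h2 := (hp u).fun_mul h1
      refine h2.congr_deriv ?_
      ring
    have hconst := is_const_of_deriv_eq_zero
      (fun u => (hder u).differentiableAt) (fun u => (hder u).deriv)
    intro u
    have h3 : p u * Real.exp (-G u) = p 0 * Real.exp (-G 0) := hconst u 0
    rw [hG0, neg_zero, Real.exp_zero, mul_one] at h3
    have h4 : Real.exp (-G u) * Real.exp (G u) = 1 := by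
      rw [← Real.exp_add]; simp
    calc p u = p u * (Real.exp (-G u) * Real.exp (G u)) := by rw [h4, mul_one]
    _ = p u * Real.exp (-G u) * Real.exp (G u) := by ring
    _ = p 0 * Real.exp (G u) := by rw [h3]
  -- bound on |G x + eta2 x| assuming the Y-bound on [0,x]
  have hGest : ∀ x, 0 ≤ x → (∀ s ∈ Icc (0:ℝ) x, Y s ≤ 2 * Y 0 * Real.exp (-(L/2) * s)) →
      |G x + eta2 * x| ≤ 1 / 2 := by
    intro x hx hb
    have hrw : G x + eta2 * x = ∫ s in (0:ℝ)..x, (g s + eta2) := by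
      rw [intervalIntegral.integral_add (hgc.intervalIntegrable _ _)
        intervalIntegrable_const, intervalIntegral.integral_const]
      simp [hGdef, smul_eq_mul]
      ring
    have hFd : ∀ s : ℝ, HasDerivAt (fun v => -(2/L) * Real.exp (-(L/2) * v))
        (Real.exp (-(L/2) * s)) s := by
      intro s
      have h1 : HasDerivAt (fun v : ℝ => -(L/2) * v) (-(L/2)) s := by
        simpa using (hasDerivAt_id s).const_mul (-(L/2))
      have h2 := (h1.exp).const_mul (-(2/L))
      refine h2.congr_deriv ?_
      field_simp
    have hEc : Continuous fun s : ℝ => Real.exp (-(L/2) * s) := by fun_prop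
    have hEint : ∫ s in (0:ℝ)..x, Real.exp (-(L/2) * s)
        = -(2/L) * Real.exp (-(L/2) * x) - -(2/L) * Real.exp (-(L/2) * 0) :=
      intervalIntegral.integral_eq_sub_of_hasDerivAt (fun s _ => hFd s)
        (hEc.intervalIntegrable _ _)
    have hEb : ∫ s in (0:ℝ)..x, Real.exp (-(L/2) * s) ≤ 2 / L := by
      rw [hEint, mul_zero, Real.exp_zero]
      have h1 : 0 < (2:ℝ)/L := by positivity
      nlinarith [Real.exp_pos (-(L/2) * x), mul_pos h1 (Real.exp_pos (-(L/2) * x))]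
    have hcont_abs : Continuous fun s => |g s + eta2| := (hgc.add continuous_const).abs
    have h1 : |∫ s in (0:ℝ)..x, (g s + eta2)| ≤ ∫ s in (0:ℝ)..x, |g s + eta2| :=
      intervalIntegral.abs_integral_le_integral_abs hx
    have h2 : ∫ s in (0:ℝ)..x, |g s + eta2|
        ≤ ∫ s in (0:ℝ)..x, (2 * L1 * Y 0) * Real.exp (-(L/2) * s) := by
      apply intervalIntegral.integral_mono_on hx (hcont_abs.intervalIntegrable _ _)
        ((continuous_const.mul hEc).intervalIntegrable _ _)
      intro s hs
      calc |g s + eta2| ≤ L1 * Y s := hg s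
      _ ≤ L1 * (2 * Y 0 * Real.exp (-(L/2) * s)) :=
          mul_le_mul_of_nonneg_left (hb s hs) hL1.le
      _ = (2 * L1 * Y 0) * Real.exp (-(L/2) * s) := by ring
    have h3 : ∫ s in (0:ℝ)..x, (2 * L1 * Y 0) * Real.exp (-(L/2) * s)
        = (2 * L1 * Y 0) * ∫ s in (0:ℝ)..x, Real.exp (-(L/2) * s) :=
      intervalIntegral.integral_const_mul _ _
    have hY0nn := hYnn 0
    have key : (2 * L1 * Y 0) * (2 / L) ≤ 1 / 2 := by
      have e1 : (2 * L1 * Y 0) * (2 / L) = (4 * (L1 * Y 0)) / L := by ring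
      rw [e1, div_le_iff₀ hL]; nlinarith [hLYmain]
    rw [hrw]
    refine h1.trans (h2.trans ?_)
    rw [h3]
    refine le_trans ?_ key
    exact mul_le_mul_of_nonneg_left hEb (by positivity)
  -- integral inequality for f
  have hEc1 : Continuous fun s : ℝ => Real.exp (eta1 * s) := by fun_prop
  have hfint : ∀ x, 0 ≤ x →
      |f x| * Real.exp (eta1 * x) ≤ |f 0| + ∫ s in (0:ℝ)..x, Real.exp (eta1 * s) * |q s| := by
    intro x hx
    have hwd : ∀ s : ℝ, HasDerivAt (fun v => f v * Real.exp (eta1 * v))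
        (Real.exp (eta1 * s) * q s) s := by
      intro s
      have h1 : HasDerivAt (fun v : ℝ => eta1 * v) eta1 s := by
        simpa using (hasDerivAt_id s).const_mul eta1
      have h2 := (hf s).fun_mul (h1.exp)
      refine h2.congr_deriv ?_
      ring
    have heq : ∫ s in (0:ℝ)..x, Real.exp (eta1 * s) * q s
        = f x * Real.exp (eta1 * x) - f 0 * Real.exp (eta1 * 0) :=
      intervalIntegral.integral_eq_sub_of_hasDerivAt (fun s _ => hwd s)
        ((hEc1.mul hqc).intervalIntegrable _ _)
    have h0 : f x * Real.exp (eta1 * x)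
        = f 0 * Real.exp (eta1 * 0) + ∫ s in (0:ℝ)..x, Real.exp (eta1 * s) * q s := by
      rw [heq]; ring
    have h1 : |f x * Real.exp (eta1 * x)|
        ≤ |f 0 * Real.exp (eta1 * 0)| + |∫ s in (0:ℝ)..x, Real.exp (eta1 * s) * q s| := by
      rw [h0]; exact abs_add_le _ _
    have h2 : |∫ s in (0:ℝ)..x, Real.exp (eta1 * s) * q s|
        ≤ ∫ s in (0:ℝ)..x, |Real.exp (eta1 * s) * q s| :=
      intervalIntegral.abs_integral_le_integral_abs hx
    have h3 : ∀ s : ℝ, |Real.exp (eta1 * s) * q s| = Real.exp (eta1 * s) * |q s| := fun s => by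
      rw [abs_mul, abs_of_pos (Real.exp_pos _)]
    simp only [h3] at h2
    have h4 : |f x * Real.exp (eta1 * x)| = |f x| * Real.exp (eta1 * x) := by
      rw [abs_mul, abs_of_pos (Real.exp_pos _)]
    have h5 : |f 0 * Real.exp (eta1 * 0)| = |f 0| := by
      rw [mul_zero, Real.exp_zero, mul_one]
    rw [h4, h5] at h1
    linarith
  -- the improvement step
  have himp : ∀ x, 0 ≤ x → (∀ s ∈ Icc (0:ℝ) x, Y s ≤ 2 * Y 0 * Real.exp (-(L/2) * s)) →
      Y x ≤ (7/4) * Y 0 * Real.exp (-(L/2) * x) := by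
    intro x hx hb
    have hY0nn := hYnn 0
    have epos : (0:ℝ) < Real.exp (-(L/2) * x) := Real.exp_pos _
    have hpart1 : |f x| ≤ Y 0 * Real.exp (-(L/2) * x) := by
      have hC : ∀ s ∈ Icc (0:ℝ) x, Real.exp (eta1 * s) * |q s|
          ≤ 4 * L1 * (Y 0)^2 * Real.exp ((eta1 - L) * x) := by
        intro s hs
        have hq1 : |q s| ≤ L1 * (2 * Y 0 * Real.exp (-(L/2) * s))^2 := by
          refine (hq s).trans ?_
          refine mul_le_mul_of_nonneg_left ?_ hL1.le
          exact pow_le_pow_left₀ (hYnn s) (hb s hs) 2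
        have e1 : Real.exp (eta1 * s) * (Real.exp (-(L/2) * s) * Real.exp (-(L/2) * s))
            = Real.exp ((eta1 - L) * s) := by
          rw [← Real.exp_add, ← Real.exp_add]; congr 1; ring
        have h2 : Real.exp (eta1 * s) * (L1 * (2 * Y 0 * Real.exp (-(L/2) * s))^2)
            = 4 * L1 * (Y 0)^2 * Real.exp ((eta1 - L) * s) := by
          rw [← e1]; ring
        have h3 : Real.exp ((eta1 - L) * s) ≤ Real.exp ((eta1 - L) * x) :=
          Real.exp_le_exp.mpr (mul_le_mul_of_nonneg_left hs.2 (by linarith))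
        calc Real.exp (eta1 * s) * |q s|
            ≤ Real.exp (eta1 * s) * (L1 * (2 * Y 0 * Real.exp (-(L/2) * s))^2) :=
            mul_le_mul_of_nonneg_left hq1 (Real.exp_pos _).le
        _ = 4 * L1 * (Y 0)^2 * Real.exp ((eta1 - L) * s) := h2
        _ ≤ 4 * L1 * (Y 0)^2 * Real.exp ((eta1 - L) * x) :=
            mul_le_mul_of_nonneg_left h3 (by positivity)
      have hint : ∫ s in (0:ℝ)..x, Real.exp (eta1 * s) * |q s|
          ≤ x * (4 * L1 * (Y 0)^2 * Real.exp ((eta1 - L) * x)) := by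
        have h8 : ∫ s in (0:ℝ)..x, Real.exp (eta1 * s) * |q s|
            ≤ ∫ _ in (0:ℝ)..x, (4 * L1 * (Y 0)^2 * Real.exp ((eta1 - L) * x)) := by
          apply intervalIntegral.integral_mono_on hx
            ((hEc1.mul hqc.abs).intervalIntegrable _ _)
            (continuous_const.intervalIntegrable _ _) hC
        rw [intervalIntegral.integral_const] at h8
        simpa using h8
      have hfx : |f x| * Real.exp (eta1 * x)
          ≤ Y 0 + x * (4 * L1 * (Y 0)^2 * Real.exp ((eta1 - L) * x)) := by
        have := hfint x hx
        have hf0 : |f 0| ≤ Y 0 := le_max_left _ _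
        linarith
      -- divide by exp (eta1 x)
      have hdiv : |f x| ≤ (Y 0 + x * (4 * L1 * (Y 0)^2 * Real.exp ((eta1 - L) * x)))
          * Real.exp (-(eta1 * x)) := by
        have h6 := mul_le_mul_of_nonneg_right hfx (Real.exp_pos (-(eta1 * x))).le
        have e2 : Real.exp (eta1 * x) * Real.exp (-(eta1 * x)) = 1 := by
          rw [← Real.exp_add]; simp
        calc |f x| = |f x| * (Real.exp (eta1 * x) * Real.exp (-(eta1 * x))) := by
              rw [e2, mul_one]
        _ = |f x| * Real.exp (eta1 * x) * Real.exp (-(eta1 * x)) := by ring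
        _ ≤ _ := h6
      have e3 : Real.exp ((eta1 - L) * x) * Real.exp (-(eta1 * x)) = Real.exp (-(L/2) * x) * Real.exp (-(L/2) * x) := by
        rw [← Real.exp_add, ← Real.exp_add]; congr 1; ring
      have e4 : Real.exp (-(eta1 * x)) ≤ Real.exp (-(L/2) * x) * Real.exp (-(L/2) * x) := by
        rw [← Real.exp_add]
        refine Real.exp_le_exp.mpr ?_
        nlinarith
      have hLY2 : 4 * L1 * (Y 0)^2 ≤ (L / 2) * Y 0 := by
        nlinarith [mul_le_mul_of_nonneg_right hLYmain hY0nn]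
      have hdiv2 : |f x| ≤ Y 0 * (Real.exp (-(L/2) * x) * Real.exp (-(L/2) * x))
          + (L/2) * Y 0 * x * (Real.exp (-(L/2) * x) * Real.exp (-(L/2) * x)) := by
        have expand : (Y 0 + x * (4 * L1 * (Y 0)^2 * Real.exp ((eta1 - L) * x)))
            * Real.exp (-(eta1 * x))
            = Y 0 * Real.exp (-(eta1 * x))
              + (4 * L1 * (Y 0)^2) * x * (Real.exp ((eta1 - L) * x) * Real.exp (-(eta1 * x))) := by
          ring
        rw [expand, e3] at hdiv
        have t1 : Y 0 * Real.exp (-(eta1 * x)) ≤ Y 0 * (Real.exp (-(L/2) * x) * Real.exp (-(L/2) * x)) :=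
          mul_le_mul_of_nonneg_left e4 hY0nn
        have t2 : (4 * L1 * (Y 0)^2) * x * (Real.exp (-(L/2) * x) * Real.exp (-(L/2) * x))
            ≤ ((L/2) * Y 0) * x * (Real.exp (-(L/2) * x) * Real.exp (-(L/2) * x)) := by
          refine mul_le_mul_of_nonneg_right (mul_le_mul_of_nonneg_right hLY2 hx) (by positivity)
        linarith
      have hone : 1 + (L/2) * x ≤ Real.exp ((L/2) * x) := by
        have := Real.add_one_le_exp ((L/2) * x)
        linarith
      have e5 : Real.exp (-(L/2) * x) * Real.exp ((L/2) * x) = 1 := by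
        rw [← Real.exp_add]; simp
      calc |f x| ≤ Y 0 * Real.exp (-(L/2) * x) * (Real.exp (-(L/2) * x) * (1 + (L/2) * x)) := by
            nlinarith [hdiv2]
      _ ≤ Y 0 * Real.exp (-(L/2) * x) * (Real.exp (-(L/2) * x) * Real.exp ((L/2) * x)) := by
            refine mul_le_mul_of_nonneg_left (mul_le_mul_of_nonneg_left hone (Real.exp_pos _).le) (by positivity)
      _ = Y 0 * Real.exp (-(L/2) * x) := by rw [e5, mul_one]
    have hpart2 : p x ≤ Y 0 * Real.exp (1/2 : ℝ) * Real.exp (-(L/2) * x) := by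
      have hGx := hGest x hx hb
      have hGle : G x ≤ 1/2 - eta2 * x := by
        have := (abs_le.mp hGx).2
        linarith
      have h7 : p x ≤ p 0 * Real.exp (1/2 - eta2 * x) := by
        rw [hprep x]
        exact mul_le_mul_of_nonneg_left (Real.exp_le_exp.mpr hGle) (hpnn 0)
      have e6 : Real.exp (1/2 - eta2 * x) = Real.exp (1/2 : ℝ) * Real.exp (-(eta2 * x)) := by
        rw [← Real.exp_add, sub_eq_add_neg]
      have e7 : Real.exp (-(eta2 * x)) ≤ Real.exp (-(L/2) * x) :=
        Real.exp_le_exp.mpr (by nlinarith)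
      have hp0Y : p 0 ≤ Y 0 := le_max_right _ _
      calc p x ≤ p 0 * Real.exp (1/2 - eta2 * x) := h7
      _ = p 0 * (Real.exp (1/2 : ℝ) * Real.exp (-(eta2 * x))) := by rw [e6]
      _ ≤ Y 0 * (Real.exp (1/2 : ℝ) * Real.exp (-(eta2 * x))) := by
            have hnn : (0:ℝ) ≤ Real.exp (1/2 : ℝ) * Real.exp (-(eta2 * x)) := by positivity
            exact mul_le_mul_of_nonneg_right hp0Y hnn
      _ ≤ Y 0 * (Real.exp (1/2 : ℝ) * Real.exp (-(L/2) * x)) := by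
            refine mul_le_mul_of_nonneg_left (mul_le_mul_of_nonneg_left e7 (Real.exp_pos _).le) hY0nn
      _ = Y 0 * Real.exp (1/2 : ℝ) * Real.exp (-(L/2) * x) := by ring
    have hexp_half := sis_aux_exp_half
    refine max_le ?_ ?_
    · refine hpart1.trans ?_
      have := mul_nonneg hY0nn epos.le
      nlinarith
    · refine hpart2.trans ?_
      have := mul_le_mul_of_nonneg_right (mul_le_mul_of_nonneg_left hexp_half hY0nn) epos.le
      linarith
  -- global decay bound via continuous induction
  have hBc : Continuous fun s : ℝ => 2 * Y 0 * Real.exp (-(L/2) * s) := by fun_prop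
  have hglob : 0 < Y 0 → ∀ x, 0 ≤ x → Y x ≤ 2 * Y 0 * Real.exp (-(L/2) * x) := by
    intro hy0pos x0 hx0
    by_contra hcon
    push_neg at hcon
    set S : Set ℝ := {s | s ∈ Icc (0:ℝ) x0 ∧ 2 * Y 0 * Real.exp (-(L/2) * s) < Y s} with hSdef
    have hSne : x0 ∈ S := ⟨⟨hx0, le_refl _⟩, hcon⟩
    have hSbdd : BddBelow S := ⟨0, fun s hs => hs.1.1⟩
    set τ := sInf S with hτdef
    have hτcl : τ ∈ closure S := csInf_mem_closure ⟨x0, hSne⟩ hSbdd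
    have hCclosed : IsClosed {s : ℝ | s ∈ Icc (0:ℝ) x0 ∧ 2 * Y 0 * Real.exp (-(L/2) * s) ≤ Y s} := by
      have : {s : ℝ | s ∈ Icc (0:ℝ) x0 ∧ 2 * Y 0 * Real.exp (-(L/2) * s) ≤ Y s}
          = Icc (0:ℝ) x0 ∩ {s : ℝ | 2 * Y 0 * Real.exp (-(L/2) * s) ≤ Y s} := rfl
      rw [this]
      exact isClosed_Icc.inter (isClosed_le hBc hYc)
    have hτC : τ ∈ Icc (0:ℝ) x0 ∧ 2 * Y 0 * Real.exp (-(L/2) * τ) ≤ Y τ := by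
      have hsub : S ⊆ {s : ℝ | s ∈ Icc (0:ℝ) x0 ∧ 2 * Y 0 * Real.exp (-(L/2) * s) ≤ Y s} :=
        fun s hs => ⟨hs.1, hs.2.le⟩
      exact (closure_minimal hsub hCclosed) hτcl
    have hbelow : ∀ s ∈ Ico (0:ℝ) τ, Y s ≤ 2 * Y 0 * Real.exp (-(L/2) * s) := by
      intro s hs
      by_contra hc
      push_neg at hc
      have hsS : s ∈ S := ⟨⟨hs.1, hs.2.le.trans hτC.1.2⟩, hc⟩
      exact absurd (csInf_le hSbdd hsS) (not_le.mpr hs.2)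
    have hτpos : 0 < τ := by
      rcases eq_or_lt_of_le hτC.1.1 with h | h
      · exfalso
        have h1 : 2 * Y 0 * Real.exp (-(L/2) * τ) ≤ Y τ := hτC.2
        rw [← h] at h1
        simp only [mul_zero, Real.exp_zero, mul_one] at h1
        have : Y 0 = max |f 0| (p 0) := rfl
        linarith [h1]
      · exact h
    have hIcc : ∀ s ∈ Icc (0:ℝ) τ, Y s ≤ 2 * Y 0 * Real.exp (-(L/2) * s) := by
      intro s hs
      rcases lt_or_eq_of_le hs.2 with h | h
      · exact hbelow s ⟨hs.1, h⟩
      · subst h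
        have hne2 : (𝓝[Ico (0:ℝ) τ] τ).NeBot := by
          rw [← mem_closure_iff_nhdsWithin_neBot, closure_Ico (ne_of_lt hτpos)]
          exact ⟨hτpos.le, le_refl τ⟩
        have htend : Tendsto (fun u => Y u - 2 * Y 0 * Real.exp (-(L/2) * u))
            (𝓝[Ico (0:ℝ) τ] τ) (𝓝 (Y τ - 2 * Y 0 * Real.exp (-(L/2) * τ))) :=
          ((hYc.sub hBc).tendsto τ).mono_left nhdsWithin_le_nhds
        have hev : ∀ᶠ u in 𝓝[Ico (0:ℝ) τ] τ, Y u - 2 * Y 0 * Real.exp (-(L/2) * u) ≤ 0 :=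
          Filter.eventually_of_mem self_mem_nhdsWithin
            (fun u hu => sub_nonpos.mpr (hbelow u hu))
        have := le_of_tendsto htend hev
        linarith
    have himpτ := himp τ hτC.1.1 hIcc
    have hτ2 := hτC.2
    have hfinal : (0:ℝ) < Y 0 * Real.exp (-(L/2) * τ) :=
      mul_pos hy0pos (Real.exp_pos _)
    linarith
  -- final conclusion
  intro t ht
  rcases eq_or_lt_of_le (hpnn 0) with h0 | h0
  · have hpt : p t = 0 := by rw [hprep t, ← h0, zero_mul]
    rw [hpt, ← h0]
    constructor <;> simp
  · have hy0pos : 0 < Y 0 := lt_of_lt_of_le h0 (le_max_right _ _)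
    have hYb : ∀ s ∈ Icc (0:ℝ) t, Y s ≤ 2 * Y 0 * Real.exp (-(L/2) * s) :=
      fun s hs => hglob hy0pos s hs.1
    have hGt := hGest t ht hYb
    have habs := abs_le.mp hGt
    have hrep := hprep t
    have hsplit : Real.exp (G t) = Real.exp (-t * eta2) * Real.exp (G t + eta2 * t) := by
      rw [← Real.exp_add]; congr 1; ring
    have hexp_half := sis_aux_exp_half
    have hE1 : Real.exp (G t + eta2 * t) ≤ 2 := by
      have h1 := Real.exp_le_exp.mpr habs.2
      calc Real.exp (G t + eta2 * t) ≤ Real.exp (1/2 : ℝ) := h1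
      _ ≤ 7/4 := hexp_half
      _ ≤ 2 := by norm_num
    have hE2 : (1/2 : ℝ) ≤ Real.exp (G t + eta2 * t) := by
      have h1 : (1/2 : ℝ) ≤ Real.exp (-(1/2) : ℝ) := by
        have := Real.add_one_le_exp (-(1/2) : ℝ)
        linarith
      exact h1.trans (Real.exp_le_exp.mpr habs.1)
    have hpos : (0:ℝ) ≤ p 0 * Real.exp (-t * eta2) :=
      mul_nonneg (hpnn 0) (Real.exp_pos _).le
    constructor
    · have h2 := mul_le_mul_of_nonneg_right hE2 hpos
      calc (1/2) * p 0 * Real.exp (-t * eta2)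
          = (1/2 : ℝ) * (p 0 * Real.exp (-t * eta2)) := by ring
      _ ≤ Real.exp (G t + eta2 * t) * (p 0 * Real.exp (-t * eta2)) := h2
      _ = p 0 * Real.exp (G t) := by rw [hsplit]; ring
      _ = p t := (hprep t).symm
    · have h2 := mul_le_mul_of_nonneg_right hE1 hpos
      calc p t = p 0 * Real.exp (G t) := hprep t
      _ = Real.exp (G t + eta2 * t) * (p 0 * Real.exp (-t * eta2)) := by rw [hsplit]; ring
      _ ≤ 2 * (p 0 * Real.exp (-t * eta2)) := h2
      _ = 2 * p 0 * Real.exp (-t * eta2) := by ring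

set_option maxHeartbeats 1000000 in
/-- Two-sided exponential bounds for the second coordinate, case of distinct
eigenvalues: if `y(0) = max{|x̃₁(0)|, x̃₂(0)/|a|} ≤ L/(8L₁)` then
`½ x₂(0) e^{-tη₂} ≤ x₂(t) ≤ 2 x₂(0) e^{-tη₂}` for all `t ≥ 0`. -/
theorem sis_transformed_second_component_bounds
    (lam1 lam2 mu1 mu2 eta1 eta2 a L L1 : ℝ)
    (hlam2 : 0 < lam2) (hmu2 : 0 < mu2) (hmu1 : 0 < mu1) (hlt : mu1 < lam1)
    (hratio : lam2 / mu2 < lam1 / mu1)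
    (heta1 : eta1 = lam1 - mu1) (heta2 : eta2 = mu2 - lam2 * mu1 / lam1)
    (hne : eta1 ≠ eta2)
    (ha : a = 1 - eta2 / eta1)
    (hL : L = min eta1 eta2)
    (hL1 : L1 = (lam1 + |lam1 - lam2|) * (eta1 + eta2) / eta1)
    (tx1 tx2 : ℝ → ℝ) (htx2nn : ∀ t : ℝ, 0 ≤ tx2 t)
    (hode1 : ∀ t : ℝ, HasDerivAt tx1
      (-eta1 * tx1 t - lam1 * (tx1 t) ^ 2
        - (eta2 * (lam1 - lam2) / eta1) * (tx2 t / a) ^ 2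
        + (lam1 - lam2 + lam1 * eta2 / eta1) * tx1 t * (tx2 t / a)) t)
    (hode2 : ∀ t : ℝ, HasDerivAt tx2
      (-eta2 * tx2 t - lam2 * tx2 t * tx1 t + (lam2 / a) * (eta2 / eta1) * (tx2 t) ^ 2) t)
    (hy0 : max |tx1 0| (tx2 0 / |a|) ≤ L / (8 * L1)) :
    ∀ t : ℝ, 0 ≤ t →
      (1 / 2) * tx2 0 * Real.exp (-t * eta2) ≤ tx2 t ∧
      tx2 t ≤ 2 * tx2 0 * Real.exp (-t * eta2) := by
  have hlam1 : 0 < lam1 := lt_trans hmu1 hlt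
  have heta1pos : 0 < eta1 := by rw [heta1]; linarith
  have heta2pos : 0 < eta2 := by
    have h1 : lam2 * mu1 < lam1 * mu2 := by
      have h := (div_lt_div_iff₀ hmu2 hmu1).mp hratio
      linarith
    rw [heta2, sub_pos, div_lt_iff₀ hlam1]
    linarith
  have hLpos : 0 < L := by rw [hL]; exact lt_min heta1pos heta2pos
  have hLe1 : L ≤ eta1 := hL ▸ min_le_left _ _
  have hLe2 : L ≤ eta2 := hL ▸ min_le_right _ _
  have habs0 : 0 ≤ |lam1 - lam2| := abs_nonneg _
  have hc0 : 0 < lam1 + |lam1 - lam2| := by linarith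
  have hL1pos : 0 < L1 := by
    rw [hL1]; exact div_pos (mul_pos hc0 (by linarith)) heta1pos
  have ha0 : a ≠ 0 := by
    rw [ha]
    intro hcon
    apply hne
    have h2 : eta2 / eta1 = 1 := by linarith
    exact ((div_eq_one_iff_eq (ne_of_gt heta1pos)).mp h2).symm
  have haabs : 0 < |a| := abs_pos.mpr ha0
  have haabs' : |a| ≠ 0 := ne_of_gt haabs
  have hc1 : Continuous tx1 := continuous_iff_continuousAt.mpr fun s => (hode1 s).continuousAt
  have hc2 : Continuous tx2 := continuous_iff_continuousAt.mpr fun s => (hode2 s).continuousAt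
  set p : ℝ → ℝ := fun s => tx2 s / |a| with hpdef
  set q : ℝ → ℝ := fun s => -lam1 * tx1 s ^ 2 - eta2 * (lam1 - lam2) / eta1 * (tx2 s / a) ^ 2
    + (lam1 - lam2 + lam1 * eta2 / eta1) * tx1 s * (tx2 s / a) with hqdef
  set g : ℝ → ℝ := fun s => -eta2 - lam2 * tx1 s + lam2 / a * (eta2 / eta1) * tx2 s with hgdef
  have hqc : Continuous q := by
    rw [hqdef]; fun_prop
  have hgc : Continuous g := by
    rw [hgdef]; fun_prop
  have hpnn : ∀ s, 0 ≤ p s := fun s => div_nonneg (htx2nn s) (abs_nonneg a)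
  have hfode : ∀ s, HasDerivAt tx1 (-eta1 * tx1 s + q s) s := by
    intro s
    convert hode1 s using 1
    simp only [hqdef]
    ring
  have hpode : ∀ s, HasDerivAt p (p s * g s) s := by
    intro s
    have h1 := (hode2 s).div_const |a|
    refine h1.congr_deriv ?_
    simp only [hpdef, hgdef]
    field_simp
  have habs_div : ∀ s, |tx2 s / a| = tx2 s / |a| := fun s => by
    rw [abs_div, abs_of_nonneg (htx2nn s)]
  have hcoef : lam1 + eta2 * |lam1 - lam2| / eta1 + (|lam1 - lam2| + lam1 * eta2 / eta1) = L1 := by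
    rw [hL1]; field_simp; ring
  have habs3 : ∀ x y z : ℝ, |x - y + z| ≤ |x| + |y| + |z| := by
    intro x y z
    have hxy : |x - y| ≤ |x| + |y| := by
      rw [sub_eq_add_neg]
      exact (abs_add_le _ _).trans_eq (by rw [abs_neg])
    calc |x - y + z| ≤ |x - y| + |z| := abs_add_le _ _
    _ ≤ |x| + |y| + |z| := by linarith
  have hq : ∀ s, |q s| ≤ L1 * (max |tx1 s| (p s)) ^ 2 := by
    intro s
    have h1 : |tx1 s| ≤ max |tx1 s| (p s) := le_max_left _ _
    have h2 : |tx2 s / a| ≤ max |tx1 s| (p s) := by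
      rw [habs_div s]; exact le_max_right _ _
    have hm : 0 ≤ max |tx1 s| (p s) := le_trans (abs_nonneg _) h1
    set m := max |tx1 s| (p s) with hmdef
    have t1 : |lam1 * tx1 s ^ 2| ≤ lam1 * m ^ 2 := by
      rw [abs_mul, abs_of_pos hlam1, abs_pow]
      exact mul_le_mul_of_nonneg_left (pow_le_pow_left₀ (abs_nonneg _) h1 2) hlam1.le
    have t2 : |eta2 * (lam1 - lam2) / eta1 * (tx2 s / a) ^ 2|
        ≤ eta2 * |lam1 - lam2| / eta1 * m ^ 2 := by
      have e1 : |eta2 * (lam1 - lam2) / eta1| = eta2 * |lam1 - lam2| / eta1 := by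
        rw [abs_div, abs_mul, abs_of_pos heta2pos, abs_of_pos heta1pos]
      rw [abs_mul, abs_pow, e1]
      exact mul_le_mul_of_nonneg_left (pow_le_pow_left₀ (abs_nonneg _) h2 2) (by positivity)
    have t3 : |(lam1 - lam2 + lam1 * eta2 / eta1) * tx1 s * (tx2 s / a)|
        ≤ (|lam1 - lam2| + lam1 * eta2 / eta1) * m * m := by
      rw [abs_mul, abs_mul]
      have e2 : |lam1 - lam2 + lam1 * eta2 / eta1| ≤ |lam1 - lam2| + lam1 * eta2 / eta1 := by
        refine (abs_add_le _ _).trans ?_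
        have e3 : |lam1 * eta2 / eta1| = lam1 * eta2 / eta1 := abs_of_nonneg (by positivity)
        rw [e3]
      refine mul_le_mul ?_ h2 (abs_nonneg _) (by positivity)
      exact mul_le_mul e2 h1 (abs_nonneg _) (by positivity)
    have hqeq : q s = -(lam1 * tx1 s ^ 2) - eta2 * (lam1 - lam2) / eta1 * (tx2 s / a) ^ 2
        + (lam1 - lam2 + lam1 * eta2 / eta1) * tx1 s * (tx2 s / a) := by
      simp only [hqdef]; ring
    have step1 : |q s| ≤ |(-(lam1 * tx1 s ^ 2))| + |eta2 * (lam1 - lam2) / eta1 * (tx2 s / a) ^ 2|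
        + |(lam1 - lam2 + lam1 * eta2 / eta1) * tx1 s * (tx2 s / a)| := by
      rw [hqeq]; exact habs3 _ _ _
    rw [abs_neg] at step1
    have step2 : |q s| ≤ lam1 * m ^ 2 + eta2 * |lam1 - lam2| / eta1 * m ^ 2
        + (|lam1 - lam2| + lam1 * eta2 / eta1) * m * m := by linarith
    calc |q s| ≤ lam1 * m ^ 2 + eta2 * |lam1 - lam2| / eta1 * m ^ 2
        + (|lam1 - lam2| + lam1 * eta2 / eta1) * m * m := step2
    _ = L1 * m ^ 2 := by rw [← hcoef]; ring
  have hlam2le : lam2 ≤ lam1 + |lam1 - lam2| := by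
    have h := le_abs_self (lam2 - lam1)
    rw [abs_sub_comm] at h
    linarith
  have hgb : ∀ s, |g s + eta2| ≤ L1 * max |tx1 s| (p s) := by
    intro s
    have h1 : |tx1 s| ≤ max |tx1 s| (p s) := le_max_left _ _
    have h2 : tx2 s / |a| ≤ max |tx1 s| (p s) := le_max_right _ _
    have hm : 0 ≤ max |tx1 s| (p s) := le_trans (abs_nonneg _) h1
    set m := max |tx1 s| (p s) with hmdef
    have e0 : g s + eta2 = -(lam2 * tx1 s) + lam2 / a * (eta2 / eta1) * tx2 s := by
      simp only [hgdef]; ring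
    have u1 : |lam2 * tx1 s| = lam2 * |tx1 s| := by rw [abs_mul, abs_of_pos hlam2]
    have u2 : |lam2 / a * (eta2 / eta1) * tx2 s| = lam2 * (eta2 / eta1) * (tx2 s / |a|) := by
      rw [abs_mul, abs_mul, abs_div, abs_div, abs_of_pos hlam2, abs_of_pos heta2pos,
        abs_of_pos heta1pos, abs_of_nonneg (htx2nn s)]
      ring
    have hcoef2 : (lam1 + |lam1 - lam2|) * (1 + eta2 / eta1) = L1 := by
      rw [hL1]; field_simp; try ring
    have stepg1 : |g s + eta2| ≤ |lam2 * tx1 s| + |lam2 / a * (eta2 / eta1) * tx2 s| := by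
      rw [e0]
      exact (abs_add_le _ _).trans_eq (by rw [abs_neg])
    have stepg2 : lam2 * |tx1 s| + lam2 * (eta2 / eta1) * (tx2 s / |a|)
        ≤ lam2 * m + lam2 * (eta2 / eta1) * m := by
      have w1 := mul_le_mul_of_nonneg_left h1 hlam2.le
      have w2 := mul_le_mul_of_nonneg_left h2 (by positivity : (0:ℝ) ≤ lam2 * (eta2 / eta1))
      linarith
    have stepg3 : lam2 * (1 + eta2 / eta1) * m ≤ (lam1 + |lam1 - lam2|) * (1 + eta2 / eta1) * m :=
      mul_le_mul_of_nonneg_right (mul_le_mul_of_nonneg_right hlam2le (by positivity)) hm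
    calc |g s + eta2| ≤ |lam2 * tx1 s| + |lam2 / a * (eta2 / eta1) * tx2 s| := stepg1
    _ = lam2 * |tx1 s| + lam2 * (eta2 / eta1) * (tx2 s / |a|) := by rw [u1, u2]
    _ ≤ lam2 * m + lam2 * (eta2 / eta1) * m := stepg2
    _ = lam2 * (1 + eta2 / eta1) * m := by ring
    _ ≤ (lam1 + |lam1 - lam2|) * (1 + eta2 / eta1) * m := stepg3
    _ = L1 * m := by rw [hcoef2]
  have main := sis_aux_decay eta1 eta2 L L1 tx1 p q g hLpos hL1pos hLe1 hLe2 hpnn hqc hgc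
    hfode hpode hq hgb hy0
  intro t ht
  obtain ⟨hlow, hhigh⟩ := main t ht
  constructor
  · have h3 := mul_le_mul_of_nonneg_right hlow haabs.le
    have h4 : (1/2) * (tx2 0 / |a|) * Real.exp (-t * eta2) * |a| ≤ (tx2 t / |a|) * |a| := by
      simpa [hpdef] using h3
    rw [div_mul_cancel₀ _ haabs'] at h4
    calc (1/2) * tx2 0 * Real.exp (-t * eta2)
        = (1/2) * (tx2 0 / |a|) * Real.exp (-t * eta2) * |a| := by field_simp
    _ ≤ tx2 t := h4
  · have h3 := mul_le_mul_of_nonneg_right hhigh haabs.le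
    have h4 : (tx2 t / |a|) * |a| ≤ 2 * (tx2 0 / |a|) * Real.exp (-t * eta2) * |a| := by
      simpa [hpdef] using h3
    rw [div_mul_cancel₀ _ haabs'] at h4
    calc tx2 t ≤ 2 * (tx2 0 / |a|) * Real.exp (-t * eta2) * |a| := h4
    _ = 2 * tx2 0 * Real.exp (-t * eta2) := by field_simp; try ring
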